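/- With A, B, C consistent 2-marginals for (r,c,h)-tables and the extended 2-marginals for (r+1,c+1,h+1)-tables R defined as above, there exists a nonnegative integer table R satisfying the extended 2-marginals with R_{1,1,1} = 0 if and only if there exists a nonnegative integer (r,c,h)-table with 2-marginals A, B, C. -/
import Mathlib

private lemma sum_rev' {n : ℕ} (f : Fin n → ℕ) : ∑ k, f (Fin.rev k) = ∑ k, f k :=
  Fintype.sum_bijective Fin.rev Fin.rev_bijective (fun k => f (Fin.rev k)) f (fun _ => rfl)


/-- Extended marginal `R_{s,t,+}` (index `none` is the new first index). -/
def extST (r c h : ℕ) (A : Fin r → Fin c → ℕ) (C : Fin r → Fin h → ℕ) :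
    Option (Fin r) → Option (Fin c) → ℕ := fun s t =>
  match s, t with
  | none, none => ∑ i, ∑ j, A i j
  | some i, none => ∑ k, C i k
  | none, some j => ∑ i, A i j
  | some i, some j => A i j

/-- Extended marginal `R_{+,t,u}`. -/
def extTU (r c h : ℕ) (B : Fin c → Fin h → ℕ) (C : Fin r → Fin h → ℕ) :
    Option (Fin c) → Option (Fin h) → ℕ := fun t u =>
  match t, u with
  | none, none => ∑ j, ∑ k, B j k
  | some j, none => ∑ k, B j k
  | none, some k => ∑ i, C i k.rev
  | some j, some k => B j k

/-- Extended marginal `R_{s,+,u}`. -/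
def extSU (r c h : ℕ) (C : Fin r → Fin h → ℕ) :
    Option (Fin r) → Option (Fin h) → ℕ := fun s u =>
  match s, u with
  | none, none => ∑ i, ∑ k, C i k
  | some i, none => ∑ k, C i k
  | none, some k => ∑ i, C i k.rev
  | some i, some k => C i k

/-- There is a table with the extended 2-marginals whose corner entry
R_{1,1,1} is zero iff there is a table with 2-marginals A, B, C. -/
theorem corner_zero_iff_feasible (r c h : ℕ)
    (A : Fin r → Fin c → ℕ) (B : Fin c → Fin h → ℕ) (C : Fin r → Fin h → ℕ)
    (hAC : ∀ i, ∑ k, C i k = ∑ j, A i j)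
    (hAB : ∀ j, ∑ i, A i j = ∑ k, B j k)
    (hBC : ∀ k, ∑ i, C i k = ∑ j, B j k) :
    (∃ R : Option (Fin r) → Option (Fin c) → Option (Fin h) → ℕ,
      (∀ s t, ∑ u, R s t u = extST r c h A C s t) ∧
      (∀ t u, ∑ s, R s t u = extTU r c h B C t u) ∧
      (∀ s u, ∑ t, R s t u = extSU r c h C s u) ∧
      R none none none = 0) ↔
    (∃ x : Fin r → Fin c → Fin h → ℕ,
      (∀ i j, ∑ k, x i j k = A i j) ∧
      (∀ j k, ∑ i, x i j k = B j k) ∧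
      (∀ i k, ∑ j, x i j k = C i k)) := by
  constructor
  · rintro ⟨R, hST, hTU, hSU, h0⟩
    -- Step 1: the corner column sums to the total
    have step1 : ∑ k, R none none (some k) = ∑ i, ∑ j, A i j := by
      have := hST none none
      rw [Fintype.sum_option] at this
      simpa [extST, h0] using this
    -- Step 2: R (some i) none (some k) = 0
    have key : ∀ k : Fin h,
        R none none (some k) + ∑ i, R (some i) none (some k) = ∑ i, C i (Fin.rev k) := by
      intro k
      have := hTU none (some k)
      rw [Fintype.sum_option] at this
      simpa [extTU] using this
    have sum2 : ∑ k, ∑ i, R (some i) none (some k) = 0 := by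
      have h1 : ∑ k, (R none none (some k) + ∑ i, R (some i) none (some k))
          = ∑ k, ∑ i, C i (Fin.rev k) := Finset.sum_congr rfl (fun k _ => key k)
      rw [Finset.sum_add_distrib, step1] at h1
      have h2 : ∑ k, ∑ i, C i (Fin.rev k) = ∑ i, ∑ j, A i j := by
        rw [sum_rev' (fun k => ∑ i, C i k), Finset.sum_comm]
        exact Finset.sum_congr rfl (fun i _ => hAC i)
      omega
    have hz1 : ∀ i k, R (some i) none (some k) = 0 := by
      intro i k
      have h3 := (Finset.sum_eq_zero_iff.mp sum2) k (Finset.mem_univ k)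
      exact (Finset.sum_eq_zero_iff.mp h3) i (Finset.mem_univ i)
    -- Step 3: R (some i) none none = ∑ k, C i k
    have step3 : ∀ i, R (some i) none none = ∑ k, C i k := by
      intro i
      have := hST (some i) none
      rw [Fintype.sum_option] at this
      simpa [extST, hz1] using this
    -- Step 4: R (some i) (some j) none = 0
    have hz2 : ∀ i j, R (some i) (some j) none = 0 := by
      intro i j
      have h4 := hSU (some i) none
      rw [Fintype.sum_option, step3] at h4
      simp only [extSU] at h4
      have h5 : ∑ j, R (some i) (some j) none = 0 := by omega
      exact (Finset.sum_eq_zero_iff.mp h5) j (Finset.mem_univ j)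
    -- Step 5: R none (some j) none = ∑ i, A i j
    have step5 : ∀ j, R none (some j) none = ∑ i, A i j := by
      intro j
      have := hTU (some j) none
      rw [Fintype.sum_option] at this
      simp only [extTU, hz2, Finset.sum_const_zero, add_zero] at this
      rw [this, ← hAB]
    -- Step 6: R none (some j) (some k) = 0
    have hz3 : ∀ j k, R none (some j) (some k) = 0 := by
      intro j k
      have h6 := hST none (some j)
      rw [Fintype.sum_option, step5] at h6
      simp only [extST] at h6
      have h7 : ∑ k, R none (some j) (some k) = 0 := by omega
      exact (Finset.sum_eq_zero_iff.mp h7) k (Finset.mem_univ k)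
    refine ⟨fun i j k => R (some i) (some j) (some k), ?_, ?_, ?_⟩
    · intro i j
      have := hST (some i) (some j)
      rw [Fintype.sum_option, hz2] at this
      simpa [extST] using this
    · intro j k
      have := hTU (some j) (some k)
      rw [Fintype.sum_option, hz3] at this
      simpa [extTU] using this
    · intro i k
      have := hSU (some i) (some k)
      rw [Fintype.sum_option, hz1] at this
      simpa [extSU] using this
  · rintro ⟨x, hx1, hx2, hx3⟩
    refine ⟨fun s t u => match s, t, u with
      | none, none, none => 0
      | some i, none, none => ∑ k, C i k
      | none, some j, none => ∑ i, A i j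
      | none, none, some k => ∑ i, C i (Fin.rev k)
      | some _, some _, none => 0
      | some _, none, some _ => 0
      | none, some _, some _ => 0
      | some i, some j, some k => x i j k, ?_, ?_, ?_, rfl⟩
    · rintro (_ | i) (_ | j) <;> rw [Fintype.sum_option] <;> simp [extST]
      · rw [sum_rev' (fun k => ∑ i, C i k), Finset.sum_comm]
        exact Finset.sum_congr rfl (fun i _ => hAC i)
      · exact hx1 i j
    · rintro (_ | j) (_ | k) <;> rw [Fintype.sum_option] <;> simp [extTU]
      · rw [Finset.sum_comm,
          show (∑ k : Fin h, ∑ i, C i k) = ∑ k, ∑ j, B j k from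
            Finset.sum_congr rfl (fun k _ => hBC k), Finset.sum_comm]
      · exact hAB j
      · exact hx2 j k
    · rintro (_ | i) (_ | k) <;> rw [Fintype.sum_option] <;> simp [extSU]
      · rw [Finset.sum_comm]
        exact Finset.sum_congr rfl (fun i _ => (hAC i).symm)
      · exact hx3 i k
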